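/- Let L be an algebraically closed field, let G ∈ L[X,Y] be an irreducible polynomial with G(0,0) = 0 and ∂G/∂Y(0,0) ≠ 0, let A = L[X,Y]/(G), and let m be the maximal ideal of A generated by the images of X and Y. Then the localization A_m is a discrete valuation ring whose maximal ideal is generated by the image of X (i.e., X is a uniformising parameter at the non-singular point (0,0) of the curve G = 0). -/

import Mathlib

open MvPolynomial

section Aux
variable {L : Type*} [CommRing L]

/-- substitution killing the second variable -/
noncomputable def killY : MvPolynomial (Fin 2) L →ₐ[L] MvPolynomial (Fin 2) L :=
  aeval (fun i : Fin 2 => if i = 0 then X 0 else 0)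

lemma killY_X0 : killY (X 0 : MvPolynomial (Fin 2) L) = X 0 := by
  simp [killY]

lemma killY_X1 : killY (X 1 : MvPolynomial (Fin 2) L) = 0 := by
  simp [killY]

lemma auxA (p : MvPolynomial (Fin 2) L) :
    (X 1 : MvPolynomial (Fin 2) L) ∣ p - killY p := by
  induction p using MvPolynomial.induction_on with
  | C a => simp [killY]
  | add p q hp hq =>
      simpa [map_add, sub_add_sub_comm] using dvd_add hp hq
  | mul_X p n hp =>
      rw [map_mul]
      rcases (by decide : ∀ m : Fin 2, m = 0 ∨ m = 1) n with rfl | rfl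
      · rw [killY_X0, ← sub_mul]
        exact hp.mul_right _
      · rw [killY_X1, mul_zero, sub_zero]
        exact dvd_mul_left _ _

lemma auxB (p : MvPolynomial (Fin 2) L) :
    (X 0 : MvPolynomial (Fin 2) L) ∣ killY p - C (eval (fun _ => (0 : L)) p) := by
  induction p using MvPolynomial.induction_on with
  | C a => simp [killY]
  | add p q hp hq =>
      simpa [map_add, sub_add_sub_comm] using dvd_add hp hq
  | mul_X p n hp =>
      rw [map_mul, show eval (fun _ => (0:L)) (p * X n) = 0 by simp, map_zero, sub_zero]
      rcases (by decide : ∀ m : Fin 2, m = 0 ∨ m = 1) n with rfl | rfl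
      · rw [killY_X0]
        exact dvd_mul_left _ _
      · rw [killY_X1, mul_zero]
        exact dvd_zero _
  
lemma auxC (p : MvPolynomial (Fin 2) L) :
    pderiv 1 (killY p) = 0 := by
  induction p using MvPolynomial.induction_on with
  | C a => simp [killY]
  | add p q hp hq => rw [map_add, map_add, hp, hq, add_zero]
  | mul_X p n hp =>
      rw [map_mul]
      rcases (by decide : ∀ m : Fin 2, m = 0 ∨ m = 1) n with rfl | rfl
      · rw [killY_X0, pderiv_mul, hp, pderiv_X_of_ne (by decide), mul_zero, zero_mul, add_zero]
      · rw [killY_X1, mul_zero, map_zero]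

end Aux


/-- The multiplicative set of polynomials in `L[X,Y]` that do not vanish at the origin,
i.e. the complement of the maximal ideal `(X,Y)`. -/
def constNonzero (L : Type*) [Field L] : Submonoid (MvPolynomial (Fin 2) L) where
  carrier := {f | MvPolynomial.eval (fun _ => (0 : L)) f ≠ 0}
  one_mem' := by simp
  mul_mem' := by
    intro f g hf hg
    simp only [Set.mem_setOf_eq, map_mul] at *
    exact mul_ne_zero hf hg

/-- The local ring `A_m` of the plane curve `G = 0` at the origin: the localization of
`A = L[X,Y]/(G)` at the maximal ideal `m = (X,Y)`, realized as a quotient of the localization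
of `L[X,Y]` at the complement of `(X,Y)`. -/
abbrev curveLocalRing (L : Type*) [Field L] (G : MvPolynomial (Fin 2) L) : Type _ :=
  Localization (constNonzero L) ⧸
    Ideal.span {algebraMap (MvPolynomial (Fin 2) L) (Localization (constNonzero L)) G}

set_option maxHeartbeats 1000000 in
set_option synthInstance.maxHeartbeats 400000 in
/-- Let `L` be an algebraically closed field and `G ∈ L[X,Y]` irreducible with
`G(0,0) = 0` and `∂G/∂Y(0,0) ≠ 0`.  Let `A = L[X,Y]/(G)` and let `m` be the maximal ideal
generated by the images of `X` and `Y`.  Then the localization `A_m` is a discrete valuation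
ring whose maximal ideal is generated by the image of `X`, i.e. `X` is a uniformising
parameter at the non-singular point `(0,0)` of the curve `G = 0`. -/
theorem local_ring_at_nonsingular_point_is_DVR_with_uniformiser_X
    {L : Type*} [Field L] [IsAlgClosed L]
    (G : MvPolynomial (Fin 2) L) (hGirr : Irreducible G)
    (hG0 : MvPolynomial.eval (fun _ => (0 : L)) G = 0)
    (hGY : MvPolynomial.eval (fun _ => (0 : L)) (MvPolynomial.pderiv 1 G) ≠ 0) :
    ∃ (hdom : IsDomain (curveLocalRing L G)) (hloc : IsLocalRing (curveLocalRing L G)),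
      @IsDiscreteValuationRing (curveLocalRing L G) _ hdom ∧
      @IsLocalRing.maximalIdeal (curveLocalRing L G) _ hloc =
        Ideal.span {Ideal.Quotient.mk _
          (algebraMap (MvPolynomial (Fin 2) L) (Localization (constNonzero L))
            (MvPolynomial.X 0))} := by
  classical
  let S := Localization (constNonzero L)
  let a : MvPolynomial (Fin 2) L →+* S := algebraMap _ S
  -- decomposition G = X 1 * H + X 0 * K with eval₀ H = ∂G/∂Y(0,0) ≠ 0
  obtain ⟨H, hH⟩ := auxA G
  obtain ⟨K, hK⟩ := auxB G
  rw [hG0, map_zero, sub_zero] at hK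
  have hG' : G = MvPolynomial.X 1 * H + MvPolynomial.X 0 * K := by
    linear_combination hH + hK
  have hHval : MvPolynomial.eval (fun _ => (0 : L)) H ≠ 0 := by
    intro h0
    apply hGY
    have hd : MvPolynomial.pderiv (1 : Fin 2) G
        = MvPolynomial.pderiv 1 (MvPolynomial.X 1 * H) + MvPolynomial.pderiv 1 (killY G) := by
      rw [← hH]; rw [map_sub]; ring
    rw [hd, auxC, add_zero, MvPolynomial.pderiv_mul, MvPolynomial.pderiv_X_self]
    have h0' : MvPolynomial.constantCoeff H = 0 := by simpa using h0
    simp [h0']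
  -- the localization is the localization at the prime ideal I = ker(eval 0)
  let I : Ideal (MvPolynomial (Fin 2) L) := RingHom.ker (MvPolynomial.eval (fun _ => (0 : L)))
  haveI hIm : I.IsMaximal :=
    RingHom.ker_isMaximal_of_surjective _ (fun r => ⟨MvPolynomial.C r, by simp⟩)
  haveI hIp : I.IsPrime := hIm.isPrime
  have hcompl : I.primeCompl = constNonzero L := by
    ext x
    change x ∉ I ↔ _
    rw [RingHom.mem_ker]
    exact Iff.rfl
  haveI hloc' : IsLocalization.AtPrime S I := by
    show IsLocalization I.primeCompl S
    rw [hcompl]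
    exact Localization.isLocalization
  haveI hlocS : IsLocalRing S := IsLocalization.AtPrime.isLocalRing S I
  have hmax : IsLocalRing.maximalIdeal S = Ideal.map a I :=
    (IsLocalization.AtPrime.map_eq_maximalIdeal I S).symm
  -- I = (X, Y)
  have hI_span : I = Ideal.span {MvPolynomial.X 0, MvPolynomial.X 1} := by
    have himg : ({MvPolynomial.X 0, MvPolynomial.X 1} : Set (MvPolynomial (Fin 2) L))
        = MvPolynomial.X '' (Set.univ : Set (Fin 2)) := by
      ext p
      simp only [Set.image_univ, Set.mem_range, Set.mem_insert_iff, Set.mem_singleton_iff,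
        Fin.exists_fin_two]
      tauto
    ext x
    rw [RingHom.mem_ker, himg, MvPolynomial.mem_ideal_span_X_image]
    have hx0 : (MvPolynomial.eval (fun _ => (0 : L))) x = MvPolynomial.coeff 0 x := by
      rw [MvPolynomial.eval_zero', MvPolynomial.constantCoeff_eq]
    rw [hx0]
    constructor
    · intro hx m hm
      have hmne : m ≠ 0 := by
        rintro rfl
        exact (MvPolynomial.mem_support_iff.mp hm) hx
      obtain ⟨i, hi⟩ := Finsupp.ne_iff.mp hmne
      exact ⟨i, trivial, by simpa using hi⟩
    · intro h
      by_contra hx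
      obtain ⟨i, -, hi⟩ := h 0 (MvPolynomial.mem_support_iff.mpr hx)
      simp at hi
  -- map of I
  have hmap : Ideal.map a I
      = Ideal.span {a (MvPolynomial.X 0), a (MvPolynomial.X 1)} := by
    rw [hI_span, Ideal.map_span, Set.image_insert_eq, Set.image_singleton]
  -- a (X 1) ∈ (a (X 0), a G)
  have hHunit : IsUnit (a H) := IsLocalization.map_units S (⟨H, show H ∈ {f | MvPolynomial.eval (fun _ => (0 : L)) f ≠ 0} from hHval⟩ : constNonzero L)
  have hkey : a (MvPolynomial.X 1) ∈ Ideal.span ({a (MvPolynomial.X 0), a G} : Set S) := by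
    obtain ⟨u, hu⟩ := hHunit
    have h1 : a G = a (MvPolynomial.X 1) * a H + a (MvPolynomial.X 0) * a K := by
      rw [hG']; simp only [map_add, map_mul]
    have hmem : a G - a (MvPolynomial.X 0) * a K
        ∈ Ideal.span ({a (MvPolynomial.X 0), a G} : Set S) := by
      refine Ideal.sub_mem _ (Ideal.subset_span (by simp)) ?_
      exact Ideal.mul_mem_right _ _ (Ideal.subset_span (by simp))
    have h2 : (u : S) * a (MvPolynomial.X 1) = a G - a (MvPolynomial.X 0) * a K := by
      rw [hu]; linear_combination -h1
    have h3 : a (MvPolynomial.X 1) = (u⁻¹ : Sˣ) * (a G - a (MvPolynomial.X 0) * a K) := by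
      rw [← h2, ← mul_assoc]
      simp
    rw [h3]
    exact Ideal.mul_mem_left _ _ hmem
  -- maximal ideal of S
  have hmaxS : IsLocalRing.maximalIdeal S
      = Ideal.span ({a (MvPolynomial.X 0), a G} : Set S) := by
    rw [hmax, hmap]
    refine le_antisymm (Ideal.span_le.mpr ?_) (Ideal.span_le.mpr ?_)
    · rintro x (rfl | rfl)
      · exact Ideal.subset_span (by simp)
      · exact hkey
    · rintro x (rfl | rfl)
      · exact Ideal.subset_span (by simp)
      · have : a G = a (MvPolynomial.X 1) * a H + a (MvPolynomial.X 0) * a K := by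
          rw [hG']; simp only [map_add, map_mul]
        rw [this]
        refine Ideal.add_mem _ ?_ ?_
        · exact Ideal.mul_mem_right _ _ (Ideal.subset_span (by simp))
        · exact Ideal.mul_mem_right _ _ (Ideal.subset_span (by simp))
  -- primality of (G) and (a G)
  have hGprime : (Ideal.span ({G} : Set (MvPolynomial (Fin 2) L))).IsPrime :=
    (Ideal.span_singleton_prime hGirr.ne_zero).mpr
      (UniqueFactorizationMonoid.irreducible_iff_prime.mp hGirr)
  have hdisj : Disjoint ((constNonzero L : Submonoid (MvPolynomial (Fin 2) L)) : Set (MvPolynomial (Fin 2) L))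
      ((Ideal.span {G} : Ideal (MvPolynomial (Fin 2) L)) : Set (MvPolynomial (Fin 2) L)) := by
    rw [Set.disjoint_left]
    intro x hx hxI
    obtain ⟨c, hc⟩ := Ideal.mem_span_singleton'.mp hxI
    apply hx
    subst hc
    have hG0' := hG0
    rw [MvPolynomial.eval_zero'] at hG0'
    simp [hG0']
  have hJ : Ideal.span ({a G} : Set S) = Ideal.map a (Ideal.span {G}) := by
    rw [Ideal.map_span, Set.image_singleton]
  haveI hJprime : (Ideal.span ({a G} : Set S)).IsPrime := by
    rw [hJ]
    exact IsLocalization.isPrime_of_isPrime_disjoint (constNonzero L) S _ hGprime hdisj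
  -- basic instances on the quotient
  haveI hdom : IsDomain (curveLocalRing L G) := Ideal.Quotient.isDomain _
  haveI hloc : IsLocalRing (curveLocalRing L G) :=
    IsLocalRing.of_surjective' (Ideal.Quotient.mk _) Ideal.Quotient.mk_surjective
  haveI : IsNoetherianRing S :=
    IsLocalization.isNoetherianRing (constNonzero L) S inferInstance
  haveI : IsNoetherianRing (curveLocalRing L G) := inferInstance
  -- maximal ideal computation in the quotient
  let mk : S →+* curveLocalRing L G := Ideal.Quotient.mk (Ideal.span {a G})
  have hkerle : RingHom.ker mk ≤ IsLocalRing.maximalIdeal S := by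
    rw [show RingHom.ker mk = Ideal.span {a G} from Ideal.mk_ker, hmaxS]
    exact Ideal.span_le.mpr (by rintro x rfl; exact Ideal.subset_span (by simp))
  have hmkmax : (Ideal.map mk (IsLocalRing.maximalIdeal S)).IsMaximal := by
    rcases Ideal.map_eq_top_or_isMaximal_of_surjective mk Ideal.Quotient.mk_surjective
      (IsLocalRing.maximalIdeal.isMaximal S) with h | h
    · exfalso
      have hcom := Ideal.comap_map_of_surjective mk Ideal.Quotient.mk_surjective
        (IsLocalRing.maximalIdeal S)
      rw [h, Ideal.comap_top, ← RingHom.ker_eq_comap_bot] at hcom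
      have : IsLocalRing.maximalIdeal S ⊔ RingHom.ker mk = IsLocalRing.maximalIdeal S :=
        sup_eq_left.mpr hkerle
      rw [this] at hcom
      exact (IsLocalRing.maximalIdeal.isMaximal S).ne_top hcom.symm
    · exact h
  have hmapm : Ideal.map mk (IsLocalRing.maximalIdeal S)
      = Ideal.span {mk (a (MvPolynomial.X 0))} := by
    rw [hmaxS, Ideal.map_span, Set.image_insert_eq, Set.image_singleton]
    have hz : mk (a G) = 0 := Ideal.Quotient.eq_zero_iff_mem.mpr (Ideal.subset_span rfl)
    rw [hz, show ({mk (a (MvPolynomial.X 0)), 0} : Set (curveLocalRing L G))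
        = insert 0 {mk (a (MvPolynomial.X 0))} from Set.pair_comm _ _]
    exact Submodule.span_insert_zero
  have hQmax : IsLocalRing.maximalIdeal (curveLocalRing L G)
      = Ideal.span {mk (a (MvPolynomial.X 0))} := by
    rw [← hmapm]
    exact (IsLocalRing.eq_maximalIdeal hmkmax).symm
  -- X does not die in the quotient
  have hX0ne : mk (a (MvPolynomial.X 0)) ≠ 0 := by
    rw [Ne, Ideal.Quotient.eq_zero_iff_mem, hJ]
    intro hmem
    have hX0G : (MvPolynomial.X 0 : MvPolynomial (Fin 2) L) ∈ Ideal.span ({G} : Set _) := by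
      rw [← IsLocalization.comap_map_of_isPrime_disjoint (constNonzero L) S hGprime hdisj]
      exact Ideal.mem_comap.mpr hmem
    obtain ⟨c, hc⟩ := Ideal.mem_span_singleton.mp hX0G
    have h01 : MvPolynomial.eval (fun _ => (0 : L)) c = 0 := by
      have h := congrArg (fun p => MvPolynomial.eval (fun _ => (0 : L))
        (MvPolynomial.pderiv (1 : Fin 2) p)) hc
      simp only [MvPolynomial.pderiv_mul, map_add, map_mul,
        MvPolynomial.pderiv_X_of_ne (show (0 : Fin 2) ≠ 1 by decide), map_zero, hG0,
        zero_mul, mul_zero, zero_add, add_zero] at h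
      rcases mul_eq_zero.mp h.symm with h' | h'
      · exact absurd h' hGY
      · exact h'
    have h00 := congrArg (fun p => MvPolynomial.eval (fun _ => (0 : L))
      (MvPolynomial.pderiv (0 : Fin 2) p)) hc
    simp only [MvPolynomial.pderiv_mul, map_add, map_mul, MvPolynomial.pderiv_X_self, map_one,
      hG0, h01, zero_mul, mul_zero, add_zero, zero_add] at h00
    exact one_ne_zero h00
  -- DVR
  have hprin : (IsLocalRing.maximalIdeal (curveLocalRing L G)).IsPrincipal :=
    ⟨⟨mk (a (MvPolynomial.X 0)), hQmax⟩⟩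
  have hPIR : IsPrincipalIdealRing (curveLocalRing L G) :=
    ((tfae_of_isNoetherianRing_of_isLocalRing_of_isDomain (curveLocalRing L G)).out 0 4).mpr
      hprin
  have hDVR : IsDiscreteValuationRing (curveLocalRing L G) :=
    { hPIR, hloc with
      not_a_field' := by
        rw [hQmax, Ne, Ideal.span_singleton_eq_bot]
        exact hX0ne }
  exact ⟨hdom, hloc, hDVR, hQmax⟩
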